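/- Let ω be a semi-selforthogonal subcategory of a triangulated category T, and suppose every object X ∈ ω̌ of the class check(add ω) admits a triangle X → M_X → X' → X[1] with M_X ∈ add ω and X' ∈ ω̌. Then every morphism f : X → Y with X ∈ ω̌ and Y ∈ ωX factors through an object of add ω. -/

import Mathlib

open CategoryTheory Category Limits Pretriangulated

universe v u

namespace RelSing

variable {C : Type u} [Category.{v} C] [Preadditive C] [HasZeroObject C]
  [HasShift C ℤ] [∀ n : ℤ, (shiftFunctor C n).Additive] [Pretriangulated C]

/-- `ω` is semi-selforthogonal (presilting): `Hom(M, M'[i]) = 0` for `M, M' ∈ ω`, `i > 0`. -/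
def SemiSelfOrth (ω : Set C) : Prop :=
  ∀ M ∈ ω, ∀ M' ∈ ω, ∀ i : ℤ, 0 < i → ∀ f : M ⟶ M'⟦i⟧, f = 0

/-- `add ω`: closure of `ω` under zero objects, finite direct sums (expressed via
biproduct data) and direct summands (retracts). -/
inductive AddCat (ω : Set C) : C → Prop
  | of {X : C} (hX : X ∈ ω) : AddCat ω X
  | zero {X : C} (hX : IsZero X) : AddCat ω X
  | sum {X Y Z : C} (i₁ : X ⟶ Z) (i₂ : Y ⟶ Z) (p₁ : Z ⟶ X) (p₂ : Z ⟶ Y)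
      (h₁ : i₁ ≫ p₁ = 𝟙 X) (h₂ : i₂ ≫ p₂ = 𝟙 Y) (h₁₂ : i₁ ≫ p₂ = 0) (h₂₁ : i₂ ≫ p₁ = 0)
      (hZ : p₁ ≫ i₁ + p₂ ≫ i₂ = 𝟙 Z) (hX : AddCat ω X) (hY : AddCat ω Y) : AddCat ω Z
  | retract {X Y : C} (i : X ⟶ Y) (r : Y ⟶ X) (hir : i ≫ r = 𝟙 X) (hY : AddCat ω Y) :
      AddCat ω X

/-- The left orthogonal `⊥ω`. -/
def leftPerp (ω : Set C) : Set C :=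
  {N | ∀ M ∈ ω, ∀ i : ℤ, 0 < i → ∀ f : N ⟶ M⟦i⟧, f = 0}

/-- The right orthogonal `ω⊥`. -/
def rightPerp (ω : Set C) : Set C :=
  {N | ∀ M ∈ ω, ∀ i : ℤ, 0 < i → ∀ f : M ⟶ N⟦i⟧, f = 0}

/-- The Auslander class `X_ω`: objects `T₀` with triangles `T_i → M_i → T_{i+1} → T_i[1]`
for all `i ≥ 0`, `M_i ∈ add ω`, `T_i ∈ ⊥ω`. -/
def Auslander (ω : Set C) : Set C :=
  {X | ∃ (T : ℕ → C) (M : ℕ → C) (f : ∀ i, T i ⟶ M i) (g : ∀ i, M i ⟶ T (i + 1))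
      (h : ∀ i, T (i + 1) ⟶ (T i)⟦(1 : ℤ)⟧),
    T 0 = X ∧ (∀ i, Triangle.mk (f i) (g i) (h i) ∈ distTriang C) ∧
      (∀ i, AddCat ω (M i)) ∧ (∀ i, T i ∈ leftPerp ω)}

/-- The co-Auslander class `ωX`: objects `T₀` with triangles `T_{i+1} → M_i → T_i → T_{i+1}[1]`
for all `i ≥ 0`, `M_i ∈ add ω`, `T_i ∈ ω⊥`. -/
def coAuslander (ω : Set C) : Set C :=
  {X | ∃ (T : ℕ → C) (M : ℕ → C) (f : ∀ i, T (i + 1) ⟶ M i) (g : ∀ i, M i ⟶ T i)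
      (h : ∀ i, T i ⟶ (T (i + 1))⟦(1 : ℤ)⟧),
    T 0 = X ∧ (∀ i, Triangle.mk (f i) (g i) (h i) ∈ distTriang C) ∧
      (∀ i, AddCat ω (M i)) ∧ (∀ i, T i ∈ rightPerp ω)}

/-- `check S` (`S̬`): objects `X₀` with triangles `X_i → C_i → X_{i+1} → X_i[1]` for
`0 ≤ i ≤ r`, `C_i ∈ S`, `X_{r+1} = 0`. -/
def CheckClass (S : Set C) : Set C :=
  {X | ∃ (r : ℕ) (T : ℕ → C) (M : ℕ → C) (f : ∀ i, T i ⟶ M i) (g : ∀ i, M i ⟶ T (i + 1))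
      (h : ∀ i, T (i + 1) ⟶ (T i)⟦(1 : ℤ)⟧),
    T 0 = X ∧ IsZero (T (r + 1)) ∧ (∀ i ≤ r, Triangle.mk (f i) (g i) (h i) ∈ distTriang C) ∧
      (∀ i ≤ r, M i ∈ S)}

/-- `hat S` (`Ŝ`): objects `X₀` with triangles `X_{i+1} → C_i → X_i → X_{i+1}[1]` for
`0 ≤ i ≤ r`, `C_i ∈ S`, `X_{r+1} = 0`. -/
def HatClass (S : Set C) : Set C :=
  {X | ∃ (r : ℕ) (T : ℕ → C) (M : ℕ → C) (f : ∀ i, T (i + 1) ⟶ M i) (g : ∀ i, M i ⟶ T i)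
      (h : ∀ i, T i ⟶ (T (i + 1))⟦(1 : ℤ)⟧),
    T 0 = X ∧ IsZero (T (r + 1)) ∧ (∀ i ≤ r, Triangle.mk (f i) (g i) (h i) ∈ distTriang C) ∧
      (∀ i ≤ r, M i ∈ S)}

/-- A (strictly full) triangulated subcategory, as a predicate on sets of objects. -/
structure IsTriangulatedSub (S : Set C) : Prop where
  zero : ∀ X : C, IsZero X → X ∈ S
  iso : ∀ {X Y : C}, (X ≅ Y) → X ∈ S → Y ∈ S
  shift : ∀ X ∈ S, ∀ n : ℤ, X⟦n⟧ ∈ S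
  ext₂ : ∀ T ∈ distTriang C, T.obj₁ ∈ S → T.obj₃ ∈ S → T.obj₂ ∈ S

/-- `⟨S⟩`: the smallest triangulated subcategory containing `S`. -/
def genTriang (S : Set C) : Set C :=
  ⋂₀ {U : Set C | S ⊆ U ∧ IsTriangulatedSub U}

/-- `S[+] = {X | X ≅ C[n], C ∈ S, n ≥ 0}`. -/
def plusClass (S : Set C) : Set C :=
  {X | ∃ Y ∈ S, ∃ n : ℕ, Nonempty (X ≅ Y⟦(n : ℤ)⟧)}

/-- `S[-] = {X | X ≅ C[n], C ∈ S, n ≤ 0}`. -/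
def minusClass (S : Set C) : Set C :=
  {X | ∃ Y ∈ S, ∃ n : ℕ, Nonempty (X ≅ Y⟦(-(n : ℤ))⟧)}

/-- `f` factors through an object of `add ω`. -/
def FactorsThruAdd (ω : Set C) {X Y : C} (f : X ⟶ Y) : Prop :=
  ∃ (M : C) (g : X ⟶ M) (h : M ⟶ Y), AddCat ω M ∧ g ≫ h = f

/-- The `ω`-Gorenstein objects: `G_ω = ωX ∩ X_ω`. -/
def Gor (ω : Set C) : Set C := coAuslander ω ∩ Auslander ω


end RelSing

open RelSing

variable {C : Type u} [Category.{v} C] [Preadditive C] [HasZeroObject C]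
  [HasShift C ℤ] [∀ n : ℤ, (shiftFunctor C n).Additive] [Pretriangulated C]


lemma shift_neg_one_hom_zero {A B : C} (h : ∀ v : A ⟶ B⟦(1 : ℤ)⟧, v = 0)
    (u : A⟦(-1 : ℤ)⟧ ⟶ B) : u = 0 := by
  apply (shiftFunctor C (1 : ℤ)).map_injective
  rw [Functor.map_zero]
  set e := shiftFunctorCompIsoId C (-1 : ℤ) (1 : ℤ) (by norm_num) with he
  have h2 : e.inv.app A ≫ (shiftFunctor C (1 : ℤ)).map u = 0 := h _
  calc (shiftFunctor C (1 : ℤ)).map u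
      = e.hom.app A ≫ (e.inv.app A ≫ (shiftFunctor C (1 : ℤ)).map u) := by
        rw [← assoc, e.hom_inv_id_app, id_comp]
    _ = 0 := by rw [h2, comp_zero]

lemma addcat_perp {ω : Set C} {Y : C} (hY : Y ∈ rightPerp ω) :
    ∀ {M : C}, AddCat ω M → ∀ i : ℤ, 0 < i → ∀ f : M ⟶ Y⟦i⟧, f = 0 := by
  intro M hM
  induction hM with
  | of h => exact fun i hi f => hY _ h i hi f
  | zero h => exact fun i hi f => h.eq_of_src f 0
  | sum i₁ i₂ p₁ p₂ h₁ h₂ h₁₂ h₂₁ hZ hXa hYa ihX ihY =>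
      intro i hi f
      have hf : f = (p₁ ≫ i₁ + p₂ ≫ i₂) ≫ f := by rw [hZ, id_comp]
      rw [hf, Preadditive.add_comp, assoc, assoc, ihX i hi (i₁ ≫ f), ihY i hi (i₂ ≫ f),
        comp_zero, comp_zero, add_zero]
  | retract i r hir hYmem ih =>
      intro n hn f
      have hf : f = i ≫ (r ≫ f) := by rw [← assoc, hir, id_comp]
      rw [hf, ih n hn (r ≫ f), comp_zero]

lemma check_perp {ω : Set C} {X Y : C} (hY : Y ∈ rightPerp ω)
    (hX : X ∈ CheckClass {A | AddCat ω A}) :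
    ∀ i : ℤ, 0 < i → ∀ f : X ⟶ Y⟦i⟧, f = 0 := by
  obtain ⟨r, T, M, ff, gg, hh, hT0, hz, htris, hMem⟩ := hX
  subst hT0
  suffices key : ∀ k j, j + k = r + 1 → ∀ i : ℤ, 0 < i → ∀ u : T j ⟶ Y⟦i⟧, u = 0 from
    key (r + 1) 0 (by omega)
  intro k
  induction k with
  | zero =>
      intro j hj i hi u
      have hjr : j = r + 1 := by omega
      subst hjr
      exact hz.eq_of_src u 0
  | succ k ih =>
      intro j hj i hi u
      have hjr : j ≤ r := by omega
      have hf0 : (Triangle.mk (ff j) (gg j) (hh j)).invRotate.mor₁ ≫ u = 0 := by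
        apply shift_neg_one_hom_zero
        intro v
        have h1 : v ≫ (shiftFunctorAdd' C i 1 (i + 1) rfl).inv.app Y = 0 :=
          ih (j + 1) (by omega) (i + 1) (by omega) _
        calc v = (v ≫ (shiftFunctorAdd' C i 1 (i + 1) rfl).inv.app Y) ≫
              (shiftFunctorAdd' C i 1 (i + 1) rfl).hom.app Y := by
              rw [assoc, Iso.inv_hom_id_app]; exact (comp_id v).symm
          _ = 0 := by rw [h1, zero_comp]
      obtain ⟨g', hg'⟩ := Triangle.yoneda_exact₂ _
        (inv_rot_of_distTriang _ (htris j hjr)) u hf0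
      rw [hg', addcat_perp hY (hMem j hjr) i hi g']; exact comp_zero

/-- For a semi-selforthogonal `ω`, if every `X ∈ check(add ω)` admits a triangle
`X → M_X → X' → X[1]` with `M_X ∈ add ω` and `X' ∈ check(add ω)`, then every
morphism `f : X ⟶ Y` with `X ∈ check(add ω)` and `Y ∈ ωX` factors through an
object of `add ω`. -/
theorem stmt11 (ω : Set C) (hω : SemiSelfOrth ω)
    (htri : ∀ X ∈ CheckClass {A | AddCat ω A},
      ∃ (M X' : C) (a : X ⟶ M) (b : M ⟶ X') (c : X' ⟶ X⟦(1 : ℤ)⟧),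
        Triangle.mk a b c ∈ (distTriang C) ∧ AddCat ω M ∧
        X' ∈ CheckClass {A | AddCat ω A})
    {X Y : C} (hX : X ∈ CheckClass {A | AddCat ω A}) (hY : Y ∈ coAuslander ω)
    (f : X ⟶ Y) :
    FactorsThruAdd ω f := by
  obtain ⟨TY, MY, fY, gY, hY', hT0, _, _, hperp⟩ := hY
  have hYperp : Y ∈ rightPerp ω := hT0 ▸ hperp 0
  obtain ⟨M, X', a, b, c, hdist, hM, hX'⟩ := htri X hX
  have hf0 : (Triangle.mk a b c).invRotate.mor₁ ≫ f = 0 := by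
    apply shift_neg_one_hom_zero
    intro v
    exact check_perp hYperp hX' 1 one_pos v
  obtain ⟨g, hg⟩ := Triangle.yoneda_exact₂ _ (inv_rot_of_distTriang _ hdist) f hf0
  exact ⟨M, a, g, hM, hg.symm⟩
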